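/- Let G be a graph such that every proper induced subgraph of G with no simplicial vertex is strongly perfect. If G has a strong stable set, then G is strongly perfect. -/

import Mathlib

open SimpleGraph

section Defs

variable {V : Type*}

/-- A stable (independent) set of a graph. -/
def IsStable (G : SimpleGraph V) (S : Set V) : Prop :=
  ∀ ⦃u v : V⦄, u ∈ S → v ∈ S → ¬ G.Adj u v

/-- `C` is a maximal clique of the induced subgraph `G[W]`. -/
def IsMaxCliqueOn (G : SimpleGraph V) (W C : Set V) : Prop :=
  C ⊆ W ∧ G.IsClique C ∧ ∀ D : Set V, D ⊆ W → G.IsClique D → C ⊆ D → D = C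

/-- `C` is a maximal clique of `G`. -/
def IsMaxClique (G : SimpleGraph V) (C : Set V) : Prop :=
  G.IsClique C ∧ ∀ D : Set V, G.IsClique D → C ⊆ D → D = C

/-- `S` is a strong stable set of the induced subgraph `G[W]`. -/
def StrongStableOn (G : SimpleGraph V) (W S : Set V) : Prop :=
  S ⊆ W ∧ IsStable G S ∧ ∀ C : Set V, IsMaxCliqueOn G W C → C.Nonempty → (S ∩ C).Nonempty

/-- `S` is a strong stable set of `G`. -/
def StrongStable (G : SimpleGraph V) (S : Set V) : Prop :=
  IsStable G S ∧ ∀ C : Set V, IsMaxClique G C → C.Nonempty → (S ∩ C).Nonempty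

/-- The induced subgraph `G[W]` is strongly perfect. -/
def StronglyPerfectOn (G : SimpleGraph V) (W : Set V) : Prop :=
  ∀ U : Set V, U ⊆ W → ∃ S : Set V, StrongStableOn G U S

/-- `G` is strongly perfect: every induced subgraph has a strong stable set. -/
def StronglyPerfect (G : SimpleGraph V) : Prop :=
  ∀ U : Set V, ∃ S : Set V, StrongStableOn G U S

/-- `G` is minimal non-strongly-perfect. -/
def MinimalNSP (G : SimpleGraph V) : Prop :=
  ¬ StronglyPerfect G ∧ ∀ W : Set V, W ≠ Set.univ → StronglyPerfectOn G W

end Defs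

/-- If `v ∈ U` is simplicial in `G[U]`, then a strong stable set of `G[U \ {v}]`
can be turned into one of `G[U]`. -/
lemma sim_step {V : Type*} (G : SimpleGraph V) (U : Set V) (v : V) (hv : v ∈ U)
    (hcl : G.IsClique {u | u ∈ U ∧ G.Adj v u})
    (S' : Set V) (hS' : StrongStableOn G (U \ {v}) S') :
    ∃ S : Set V, StrongStableOn G U S := by
  set N : Set V := {u | u ∈ U ∧ G.Adj v u} with hN
  obtain ⟨hsub, hstab, hmeet⟩ := hS'
  have hS'U : S' ⊆ U := fun u hu => (hsub hu).1
  have hvS' : v ∉ S' := fun h => (hsub h).2 rfl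
  -- maximal cliques of U not containing v are maximal cliques of U \ {v}
  have hmax_no_v : ∀ C : Set V, IsMaxCliqueOn G U C → v ∉ C → IsMaxCliqueOn G (U \ {v}) C := by
    intro C ⟨hCU, hCcl, hCmax⟩ hvC
    refine ⟨fun u hu => ⟨hCU hu, fun he => hvC (he ▸ hu)⟩, hCcl, fun D hD hDcl hCD =>
      hCmax D (fun u hu => (hD hu).1) hDcl hCD⟩
  by_cases h : (S' ∩ N).Nonempty
  · -- S' itself works
    refine ⟨S', hS'U, hstab, fun C hC hCne => ?_⟩
    by_cases hvC : v ∈ C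
    · -- C = insert v N
      obtain ⟨hCU, hCcl, hCmax⟩ := hC
      have hCsub : C ⊆ insert v N := by
        intro u hu
        rcases eq_or_ne u v with rfl | hne
        · exact Set.mem_insert _ _
        · exact Set.mem_insert_of_mem _ ⟨hCU hu, hCcl hvC hu (Ne.symm hne)⟩
      have hins_cl : G.IsClique (insert v N) := by
        intro a ha b hb hab
        rcases ha with rfl | ha
        · rcases hb with rfl | hb
          · exact absurd rfl hab
          · exact hb.2
        · rcases hb with rfl | hb
          · exact ha.2.symm
          · exact hcl ha hb hab
      have hins_sub : insert v N ⊆ U := by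
        intro a ha; rcases ha with rfl | ha; exacts [hv, ha.1]
      have hCeq : insert v N = C := hCmax _ hins_sub hins_cl hCsub
      obtain ⟨s, hsS, hsN⟩ := h
      exact ⟨s, hsS, hCeq ▸ Set.mem_insert_of_mem _ hsN⟩
    · exact hmeet C (hmax_no_v C hC hvC) hCne
  · -- add v to S'
    have hdisj : ∀ u ∈ S', ¬ G.Adj v u := fun u hu hadj => h ⟨u, hu, hS'U hu, hadj⟩
    refine ⟨insert v S', ?_, ?_, ?_⟩
    · intro u hu; rcases hu with rfl | hu; exacts [hv, hS'U hu]
    · intro a b ha hb hab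
      rcases ha with rfl | ha
      · rcases hb with rfl | hb
        · exact G.loopless.irrefl _ hab
        · exact hdisj b hb hab
      · rcases hb with rfl | hb
        · exact hdisj a ha hab.symm
        · exact hstab ha hb hab
    · intro C hC hCne
      by_cases hvC : v ∈ C
      · exact ⟨v, Set.mem_insert _ _, hvC⟩
      · obtain ⟨s, hsS, hsC⟩ := hmeet C (hmax_no_v C hC hvC) hCne
        exact ⟨s, Set.mem_insert_of_mem _ hsS, hsC⟩

theorem strong_basis_with_sss_stronglyPerfect {V : Type*} [Fintype V] (G : SimpleGraph V)
    (hbasis : ∀ W : Set V, W ≠ Set.univ →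
      (∀ v ∈ W, ¬ G.IsClique {u | u ∈ W ∧ G.Adj v u}) → StronglyPerfectOn G W)
    (hS : ∃ S : Set V, StrongStableOn G Set.univ S) :
    StronglyPerfect G := by
  have key : ∀ n : ℕ, ∀ U : Set V, U.ncard ≤ n → ∃ S : Set V, StrongStableOn G U S := by
    intro n
    induction n with
    | zero =>
      intro U hU
      have hU0 : U = ∅ := (Set.ncard_eq_zero (Set.toFinite U)).mp (Nat.le_zero.mp hU)
      subst hU0
      refine ⟨∅, subset_rfl, fun a b ha => absurd ha (Set.notMem_empty a), ?_⟩
      intro C hC hCne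
      obtain ⟨c, hc⟩ := hCne
      exact absurd (hC.1 hc) (Set.notMem_empty c)
    | succ n ih =>
      intro U hU
      by_cases huniv : U = Set.univ
      · subst huniv; exact hS
      · by_cases hsimp : ∃ v ∈ U, G.IsClique {u | u ∈ U ∧ G.Adj v u}
        · obtain ⟨v, hv, hcl⟩ := hsimp
          have hlt : (U \ {v}).ncard < U.ncard :=
            Set.ncard_diff_singleton_lt_of_mem hv (Set.toFinite U)
          obtain ⟨S', hS'⟩ := ih (U \ {v}) (by omega)
          exact sim_step G U v hv hcl S' hS'
        · push_neg at hsimp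
          exact hbasis U huniv hsimp U subset_rfl
  intro U
  exact key U.ncard U le_rfl
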